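/- Let ω ∈ ℝ, μ > 0, β > 0, α > γ > 0. Suppose u₁, u₂, u₃ are twice continuously differentiable on the closed unit ball, positive on the closed unit ball, satisfy in B₁ the system L_ω u₁ = μu₁(1−u₁) − βαu₁u₂ − βγu₁u₃, L_ω u₂ = μu₂(1−u₂) − βγu₁u₂ − βαu₂u₃, L_ω u₃ = μu₃(1−u₃) − βαu₁u₃ − βγu₂u₃, and have vanishing normal derivative ∂uᵢ/∂n = 0 on ∂B₁ (i.e., the directional derivative of uᵢ in the direction x vanishes for every x ∈ ∂B₁). Then 0 < uᵢ(x) < 1 for every x in the closed unit ball and every i = 1, 2, 3. -/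

import Mathlib

noncomputable section

/-- First partial derivative `∂₁u`. -/
def pd1 (u : ℝ × ℝ → ℝ) (x : ℝ × ℝ) : ℝ := fderiv ℝ u x (1, 0)

/-- Second partial derivative `∂₂u`. -/
def pd2 (u : ℝ × ℝ → ℝ) (x : ℝ × ℝ) : ℝ := fderiv ℝ u x (0, 1)

/-- The Laplacian `Δu = ∂₁₁u + ∂₂₂u`. -/
def lap (u : ℝ × ℝ → ℝ) (x : ℝ × ℝ) : ℝ := pd1 (pd1 u) x + pd2 (pd2 u) x

/-- The rotating-frame operator `L_ω u = −Δu + ω x⊥·∇u`. -/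
def Lop (ω : ℝ) (u : ℝ × ℝ → ℝ) (x : ℝ × ℝ) : ℝ :=
  -lap u x + ω * (-x.2 * pd1 u x + x.1 * pd2 u x)

/-- The open unit disk `B₁ ⊂ ℝ²`. -/
def unitBall : Set (ℝ × ℝ) := {x | x.1 ^ 2 + x.2 ^ 2 < 1}

/-- The closed unit disk in `ℝ²`. -/
def unitClosedBall : Set (ℝ × ℝ) := {x | x.1 ^ 2 + x.2 ^ 2 ≤ 1}

/-- The unit circle `∂B₁ ⊂ ℝ²`. -/
def unitSphere : Set (ℝ × ℝ) := {x | x.1 ^ 2 + x.2 ^ 2 = 1}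

open Set Filter Topology

/-- One-dimensional second derivative test: at an interior local maximum the second
derivative is nonpositive. -/
lemma second_deriv_test {h dh : ℝ → ℝ} {d : ℝ}
    (hd : ∀ᶠ t in 𝓝 (0:ℝ), HasDerivAt h (dh t) t)
    (hdd : HasDerivAt dh d 0) (hmax : IsLocalMax h 0) : d ≤ 0 := by
  by_contra hcon
  push_neg at hcon
  have h0 : dh 0 = 0 := hmax.hasDerivAt_eq_zero hd.self_of_nhds
  have hs : Tendsto (slope dh 0) (𝓝[>] (0:ℝ)) (𝓝 d) :=
    (hasDerivAt_iff_tendsto_slope.1 hdd).mono_left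
      (nhdsWithin_mono _ (fun t ht => ne_of_gt ht))
  have hgt : ∀ᶠ t in 𝓝[>] (0:ℝ), d/2 < slope dh 0 t :=
    hs.eventually (eventually_gt_nhds (by linarith))
  have hpos : ∀ᶠ t in 𝓝 (0:ℝ), t ∈ Ioi (0:ℝ) → 0 < dh t := by
    have : ∀ᶠ t in 𝓝[>] (0:ℝ), 0 < dh t := by
      filter_upwards [hgt, self_mem_nhdsWithin] with t h1 h2
      have ht : (0:ℝ) < t := h2
      have : 0 < slope dh 0 t := lt_trans (by linarith) h1
      rw [slope_def_field] at this
      have := div_pos_iff.mp (by simpa [h0] using this)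
      rcases this with ⟨ha, _⟩ | ⟨_, hb⟩
      · linarith
      · linarith
    exact eventually_nhdsWithin_iff.1 this
  obtain ⟨δ₁, hδ₁, H₁⟩ := Metric.eventually_nhds_iff.1 hd
  obtain ⟨δ₂, hδ₂, H₂⟩ := Metric.eventually_nhds_iff.1 hpos
  obtain ⟨δ₃, hδ₃, H₃⟩ := Metric.eventually_nhds_iff.1 (hmax : ∀ᶠ t in 𝓝 (0:ℝ), h t ≤ h 0)
  set δ := min δ₁ (min δ₂ δ₃) / 2 with hδdef
  have hδ : 0 < δ := by positivity
  have hδ1 : δ < δ₁ := by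
    have := min_le_left δ₁ (min δ₂ δ₃); rw [hδdef]; linarith
  have hδ2 : δ < δ₂ := by
    have h' := min_le_right δ₁ (min δ₂ δ₃)
    have := min_le_left δ₂ δ₃; rw [hδdef]; linarith
  have hδ3 : δ < δ₃ := by
    have h' := min_le_right δ₁ (min δ₂ δ₃)
    have := min_le_right δ₂ δ₃; rw [hδdef]; linarith
  have hmono : StrictMonoOn h (Icc 0 δ) := by
    apply strictMonoOn_of_deriv_pos (convex_Icc 0 δ)
    · intro t ht
      have : dist t 0 < δ₁ := by
        rw [Real.dist_eq, sub_zero, abs_of_nonneg ht.1]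
        exact lt_of_le_of_lt ht.2 hδ1
      exact (H₁ this).continuousAt.continuousWithinAt
    · intro t ht
      rw [interior_Icc] at ht
      have hd1 : dist t 0 < δ₁ := by
        rw [Real.dist_eq, sub_zero, abs_of_pos ht.1]; linarith [ht.2]
      have hd2 : dist t 0 < δ₂ := by
        rw [Real.dist_eq, sub_zero, abs_of_pos ht.1]; linarith [ht.2]
      rw [(H₁ hd1).deriv]
      exact H₂ hd2 ht.1
  have hlt : h 0 < h δ := hmono ⟨le_refl 0, hδ.le⟩ ⟨hδ.le, le_refl δ⟩ hδ
  have hle : h δ ≤ h 0 := H₃ (by rw [Real.dist_eq, sub_zero, abs_of_pos hδ]; exact hδ3)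
  linarith

/-- At an interior local maximum of a `C²` function, every directional second
derivative is nonpositive. -/
lemma localMax_second {u : ℝ × ℝ → ℝ} {y w : ℝ × ℝ} (hu : ContDiffAt ℝ 2 u y)
    (hmax : IsLocalMax u y) :
    fderiv ℝ (fun x => fderiv ℝ u x w) y w ≤ 0 := by
  have hu1 : ContDiffAt ℝ 1 (fderiv ℝ u) y := hu.fderiv_right (by norm_num)
  have hdiffA : DifferentiableAt ℝ (fderiv ℝ u) y := hu1.differentiableAt (by norm_num)
  have hev : ∀ᶠ x in 𝓝 y, DifferentiableAt ℝ u x :=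
    (hu.eventually (by norm_num)).mono fun x hx => hx.differentiableAt (by norm_num)
  set line : ℝ → ℝ × ℝ := fun t => y + t • w with hline_def
  have hline : ∀ t, HasDerivAt line w t := by
    intro t
    have : HasDerivAt (fun s : ℝ => s • w) ((1:ℝ) • w) t := (hasDerivAt_id t).smul_const w
    simpa [hline_def] using this.const_add y
  have hline0 : line 0 = y := by simp [hline_def]
  have hcont : Continuous line := by
    have := fun t => (hline t).continuousAt
    exact continuous_iff_continuousAt.2 this
  have htends : Tendsto line (𝓝 0) (𝓝 y) := by
    have := hcont.tendsto 0
    rwa [hline0] at this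
  have hmax' : IsLocalMax (u ∘ line) 0 := by
    have : ∀ᶠ t in 𝓝 (0:ℝ), u (line t) ≤ u y := htends.eventually hmax
    simpa [IsLocalMax, IsMaxFilter, hline0] using this
  set g : ℝ × ℝ → ℝ := fun x => fderiv ℝ u x w with hg_def
  have hgdiff : DifferentiableAt ℝ g y := hdiffA.clm_apply (differentiableAt_const w)
  have hgF : HasFDerivAt g (fderiv ℝ g y) y := hgdiff.hasFDerivAt
  have hd : ∀ᶠ t in 𝓝 (0:ℝ), HasDerivAt (u ∘ line) (g (line t)) t := by
    filter_upwards [htends.eventually hev] with t ht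
    exact ht.hasFDerivAt.comp_hasDerivAt t (hline t)
  have hdd : HasDerivAt (fun t => g (line t)) (fderiv ℝ g y w) 0 := by
    have hgF' : HasFDerivAt g (fderiv ℝ g y) (line 0) := hline0 ▸ hgF
    exact hgF'.comp_hasDerivAt 0 (hline 0)
  exact second_deriv_test hd hdd hmax'

/-- Derivative of a linear function of two variables. -/
lemma hasFDerivAt_lin (a b : ℝ) (x : ℝ × ℝ) :
    HasFDerivAt (fun y : ℝ × ℝ => a * y.1 + b * y.2)
      (a • ContinuousLinearMap.fst ℝ ℝ ℝ + b • ContinuousLinearMap.snd ℝ ℝ ℝ) x :=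
  ((hasFDerivAt_fst.const_mul a).add (hasFDerivAt_snd.const_mul b))

/-- The derivative of `x ↦ ε‖x‖²`. -/
def Lq (ε : ℝ) (x : ℝ × ℝ) : (ℝ × ℝ) →L[ℝ] ℝ :=
  (2*ε*x.1) • ContinuousLinearMap.fst ℝ ℝ ℝ + (2*ε*x.2) • ContinuousLinearMap.snd ℝ ℝ ℝ

lemma hasFDerivAt_q (ε : ℝ) (x : ℝ × ℝ) :
    HasFDerivAt (fun x : ℝ × ℝ => ε * (x.1 ^ 2 + x.2 ^ 2)) (Lq ε x) x := by
  have h : HasFDerivAt (fun y : ℝ × ℝ => (ε * y.1) * y.1 + (ε * y.2) * y.2)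
      ((((ε*x.1) • ContinuousLinearMap.fst ℝ ℝ ℝ + x.1 • ((ε:ℝ) • ContinuousLinearMap.fst ℝ ℝ ℝ))) +
        (((ε*x.2) • ContinuousLinearMap.snd ℝ ℝ ℝ + x.2 • ((ε:ℝ) • ContinuousLinearMap.snd ℝ ℝ ℝ)))) x :=
    ((hasFDerivAt_fst.const_mul ε).mul hasFDerivAt_fst).add
      ((hasFDerivAt_snd.const_mul ε).mul hasFDerivAt_snd)
  have hfun : (fun x : ℝ × ℝ => ε * (x.1 ^ 2 + x.2 ^ 2))
      = fun y : ℝ × ℝ => (ε * y.1) * y.1 + (ε * y.2) * y.2 := by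
    funext y; ring
  rw [hfun]
  convert h using 1
  apply ContinuousLinearMap.ext
  rintro ⟨a, b⟩
  simp only [Lq, ContinuousLinearMap.add_apply, ContinuousLinearMap.coe_smul', Pi.smul_apply,
    ContinuousLinearMap.coe_fst', ContinuousLinearMap.coe_snd', smul_eq_mul]
  ring

lemma Lq_apply (ε : ℝ) (x w : ℝ × ℝ) : Lq ε x w = 2*ε*x.1*w.1 + 2*ε*x.2*w.2 := by
  ring_nf
  simp [Lq, ContinuousLinearMap.add_apply]
  ring

/-- At an interior local maximum of `u - ε‖x‖²`, the gradient of `u` equals `2εx` and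
the Laplacian of `u` is at most `4ε`. -/
lemma interior_estimates {u : ℝ × ℝ → ℝ} {y : ℝ × ℝ} {ε : ℝ}
    (hCu : ContDiffAt ℝ 2 u y)
    (hlocmax : IsLocalMax (fun x => u x - ε * (x.1 ^ 2 + x.2 ^ 2)) y) :
    pd1 u y = 2*ε*y.1 ∧ pd2 u y = 2*ε*y.2 ∧ lap u y ≤ 4*ε := by
  have hev : ∀ᶠ x in 𝓝 y, DifferentiableAt ℝ u x :=
    (hCu.eventually (by norm_num)).mono fun x hx => hx.differentiableAt (by norm_num)
  set v : ℝ × ℝ → ℝ := fun x => u x - ε * (x.1 ^ 2 + x.2 ^ 2) with hv_def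
  have hqC : ContDiff ℝ 2 (fun x : ℝ × ℝ => ε * (x.1 ^ 2 + x.2 ^ 2)) := by
    exact contDiff_const.mul ((contDiff_fst.pow 2).add (contDiff_snd.pow 2))
  have hvC : ContDiffAt ℝ 2 v y := hCu.sub hqC.contDiffAt
  have hud : DifferentiableAt ℝ u y := hev.self_of_nhds
  have hgrad : fderiv ℝ v y = 0 := hlocmax.fderiv_eq_zero
  have hsub : fderiv ℝ v y = fderiv ℝ u y - Lq ε y := by
    rw [hv_def]
    rw [fderiv_fun_sub hud (hasFDerivAt_q ε y).differentiableAt, (hasFDerivAt_q ε y).fderiv]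
  have hfd : fderiv ℝ u y = Lq ε y := by
    rw [hgrad] at hsub; exact (eq_of_sub_eq_zero hsub.symm)
  have hpd1 : pd1 u y = 2*ε*y.1 := by
    rw [pd1, hfd, Lq_apply]; norm_num
  have hpd2 : pd2 u y = 2*ε*y.2 := by
    rw [pd2, hfd, Lq_apply]; norm_num
  refine ⟨hpd1, hpd2, ?_⟩
  have key : ∀ w : ℝ × ℝ, fderiv ℝ (fun x => fderiv ℝ u x w) y w
      - (2*ε*w.1*w.1 + 2*ε*w.2*w.2) ≤ 0 := by
    intro w
    have h2 : fderiv ℝ (fun x => fderiv ℝ v x w) y w ≤ 0 := localMax_second hvC hlocmax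
    have hEq : (fun x => fderiv ℝ v x w)
        =ᶠ[𝓝 y] (fun x => fderiv ℝ u x w - ((2*ε*w.1) * x.1 + (2*ε*w.2) * x.2)) := by
      filter_upwards [hev] with x hx
      have : fderiv ℝ v x = fderiv ℝ u x - Lq ε x := by
        rw [hv_def, fderiv_fun_sub hx (hasFDerivAt_q ε x).differentiableAt,
          (hasFDerivAt_q ε x).fderiv]
      rw [this]
      simp [Lq_apply]
      ring
    rw [hEq.fderiv_eq] at h2
    have hu1 : ContDiffAt ℝ 1 (fderiv ℝ u) y := hCu.fderiv_right (by norm_num)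
    have hduw : DifferentiableAt ℝ (fun x => fderiv ℝ u x w) y :=
      (hu1.differentiableAt (by norm_num)).clm_apply (differentiableAt_const w)
    have hl := hasFDerivAt_lin (2*ε*w.1) (2*ε*w.2) y
    rw [fderiv_fun_sub hduw hl.differentiableAt, hl.fderiv] at h2
    simpa using h2
  have k1 := key (1, 0)
  have k2 := key (0, 1)
  simp at k1 k2
  have e1 : pd1 (pd1 u) y = fderiv ℝ (fun x => fderiv ℝ u x ((1:ℝ), (0:ℝ))) y (1, 0) := rfl
  have e2 : pd2 (pd2 u) y = fderiv ℝ (fun x => fderiv ℝ u x ((0:ℝ), (1:ℝ))) y (0, 1) := rfl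
  rw [lap, e1, e2]
  linarith

lemma isOpen_unitBall : IsOpen unitBall := by
  have : Continuous fun x : ℝ × ℝ => x.1 ^ 2 + x.2 ^ 2 := by fun_prop
  exact isOpen_lt this continuous_const

lemma isCompact_unitClosedBall : IsCompact unitClosedBall := by
  have hcont : Continuous fun x : ℝ × ℝ => x.1 ^ 2 + x.2 ^ 2 := by fun_prop
  rw [Metric.isCompact_iff_isClosed_bounded]
  constructor
  · exact isClosed_le hcont continuous_const
  · apply Bornology.IsBounded.subset (Metric.isBounded_closedBall (x := (0 : ℝ × ℝ)) (r := 1))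
    intro x hx
    have hx' : x.1 ^ 2 + x.2 ^ 2 ≤ 1 := hx
    simp only [Metric.mem_closedBall, dist_zero_right, Prod.norm_def, sup_le_iff]
    constructor
    · rw [Real.norm_eq_abs, abs_le]; constructor <;> nlinarith [sq_nonneg x.1, sq_nonneg x.2]
    · rw [Real.norm_eq_abs, abs_le]; constructor <;> nlinarith [sq_nonneg x.1, sq_nonneg x.2]

/-- The auxiliary function `u - ε‖x‖²` cannot attain its maximum over the closed disk
on the boundary circle, because of the Neumann boundary condition. -/
lemma boundary_max_absurd {u : ℝ × ℝ → ℝ} {ε : ℝ} (hε : 0 < ε)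
    (hreg : ContDiffOn ℝ 2 u unitClosedBall)
    (hbc : ∀ x ∈ unitSphere, fderivWithin ℝ u unitClosedBall x x = 0)
    {x₀ : ℝ × ℝ} (hx₀ : x₀ ∈ unitSphere)
    (hmax : IsMaxOn (fun x : ℝ × ℝ => u x - ε * (x.1 ^ 2 + x.2 ^ 2)) unitClosedBall x₀) :
    False := by
  have hx₀' : x₀.1 ^ 2 + x₀.2 ^ 2 = 1 := hx₀
  have hx₀c : x₀ ∈ unitClosedBall := le_of_eq hx₀'
  set v : ℝ × ℝ → ℝ := fun x => u x - ε * (x.1 ^ 2 + x.2 ^ 2) with hv_def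
  set c : ℝ → ℝ × ℝ := fun t => t • x₀ with hc_def
  have hct : ∀ t, c t = (t * x₀.1, t * x₀.2) := by
    intro t; simp [hc_def, Prod.smul_def, smul_eq_mul]
  have hmem : MapsTo c (Icc (0:ℝ) 1) unitClosedBall := by
    intro t ht
    have : (c t).1 ^ 2 + (c t).2 ^ 2 ≤ 1 := by
      rw [hct t]; simp only
      have heq : (t * x₀.1) ^ 2 + (t * x₀.2) ^ 2 = t ^ 2 := by
        linear_combination t ^ 2 * hx₀'
      rw [heq]
      nlinarith [ht.1, ht.2]
    exact this
  have hc1 : c 1 = x₀ := one_smul ℝ x₀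
  have hdu : DifferentiableWithinAt ℝ u unitClosedBall x₀ :=
    (hreg.differentiableOn (by norm_num)) x₀ hx₀c
  have hcd : ∀ t, HasDerivAt c x₀ t := by
    intro t
    simpa [hc_def] using (hasDerivAt_id t).smul_const x₀
  have hguD : HasDerivWithinAt (u ∘ c) (fderivWithin ℝ u unitClosedBall x₀ x₀) (Icc 0 1) 1 := by
    have hDu : HasFDerivWithinAt u (fderivWithin ℝ u unitClosedBall x₀) unitClosedBall (c 1) := by
      rw [hc1]; exact hdu.hasFDerivWithinAt
    exact hDu.comp_hasDerivWithinAt 1 ((hcd 1).hasDerivWithinAt) hmem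
  rw [hbc x₀ hx₀] at hguD
  have hqd : HasDerivWithinAt (fun t : ℝ => ε * ((c t).1 ^ 2 + (c t).2 ^ 2)) (2*ε) (Icc 0 1) 1 := by
    have hfun : (fun t : ℝ => ε * ((c t).1 ^ 2 + (c t).2 ^ 2)) = fun t : ℝ => ε * t ^ 2 := by
      funext t
      rw [hct t]; simp only
      linear_combination (ε * t ^ 2) * hx₀'
    rw [hfun]
    have h2 : HasDerivAt (fun t : ℝ => ε * t ^ 2) (2 * ε) 1 := by
      have := (hasDerivAt_pow 2 (1:ℝ)).const_mul ε
      norm_num at this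
      simpa [mul_comm] using this
    exact h2.hasDerivWithinAt
  have hgv : HasDerivWithinAt (v ∘ c) (0 - 2*ε) (Icc 0 1) 1 := hguD.sub hqd
  have hmaxg : IsMaxOn (v ∘ c) (Icc (0:ℝ) 1) 1 := by
    intro t ht
    have := hmax (hmem ht)
    simpa [hc1] using this
  have hcone : (-1 : ℝ) ∈ posTangentConeAt (Icc (0:ℝ) 1) 1 := by
    have hseg : segment ℝ (1:ℝ) 0 ⊆ Icc (0:ℝ) 1 := by
      rw [segment_symm, segment_eq_Icc (zero_le_one)]
    have := sub_mem_posTangentConeAt_of_segment_subset hseg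
    simpa using this
  have hnonpos := hmaxg.localize.hasFDerivWithinAt_nonpos hgv.hasFDerivWithinAt hcone
  simp only [ContinuousLinearMap.toSpanSingleton_apply,
    smul_eq_mul] at hnonpos
  nlinarith

/-- Main estimate: a positive Neumann solution of `L_ω u ≤ μu(1-u) - c·u·z`
with `z > 0` is bounded above by `1`. -/
lemma below_one (ω μ cc : ℝ) (hμ : 0 < μ) (hc : 0 < cc) (u z : ℝ × ℝ → ℝ)
    (hreg : ContDiffOn ℝ 2 u unitClosedBall)
    (hzc : ContinuousOn z unitClosedBall)
    (hzpos : ∀ x ∈ unitClosedBall, 0 < z x)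
    (hpde : ∀ x ∈ unitBall, Lop ω u x ≤ μ * u x * (1 - u x) - cc * u x * z x)
    (hbc : ∀ x ∈ unitSphere, fderivWithin ℝ u unitClosedBall x x = 0) :
    ∀ x ∈ unitClosedBall, u x < 1 := by
  by_contra hcon
  push_neg at hcon
  obtain ⟨x₁, hx₁, hge⟩ := hcon
  have hcomp := isCompact_unitClosedBall
  have hne : unitClosedBall.Nonempty := ⟨(0, 0), by norm_num [unitClosedBall]⟩
  have hucont : ContinuousOn u unitClosedBall := hreg.continuousOn
  obtain ⟨xM, hxM, hMmax⟩ := hcomp.exists_isMaxOn hne hucont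
  obtain ⟨xm, hxm, hmmin⟩ := hcomp.exists_isMinOn hne hzc
  set M := u xM with hM_def
  set m := z xm with hm_def
  have hM1 : (1:ℝ) ≤ M := le_trans hge (hMmax hx₁)
  have hm0 : 0 < m := hzpos xm hxm
  have hden : (0:ℝ) < 4 + μ * M := by
    linarith [mul_pos hμ (lt_of_lt_of_le zero_lt_one hM1)]
  set ε := min (M/2) (cc*M*m/(4*(4+μ*M))) with hε_def
  have hε : 0 < ε := lt_min (by linarith) (by positivity)
  have hεM : ε ≤ M/2 := min_le_left _ _
  have hεc : ε * (4*(4+μ*M)) ≤ cc*M*m := by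
    have h' : ε ≤ cc*M*m/(4*(4+μ*M)) := min_le_right _ _
    calc ε * (4*(4+μ*M)) ≤ (cc*M*m/(4*(4+μ*M))) * (4*(4+μ*M)) := by
          apply mul_le_mul_of_nonneg_right h'; positivity
      _ = cc*M*m := by field_simp
  set v : ℝ × ℝ → ℝ := fun x => u x - ε * (x.1 ^ 2 + x.2 ^ 2) with hv_def
  have hvcont : ContinuousOn v unitClosedBall := by
    apply hucont.sub
    exact (Continuous.continuousOn (by fun_prop))
  obtain ⟨y, hy, hvmax⟩ := hcomp.exists_isMaxOn hne hvcont
  have hyball : y ∈ unitBall := by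
    have hy' : y.1 ^ 2 + y.2 ^ 2 ≤ 1 := hy
    rcases lt_or_eq_of_le hy' with h | h
    · exact h
    · exact (boundary_max_absurd hε hreg hbc h hvmax).elim
  have hnhds : unitClosedBall ∈ 𝓝 y :=
    Filter.mem_of_superset (isOpen_unitBall.mem_nhds hyball)
      (fun x hx => le_of_lt (show x.1 ^ 2 + x.2 ^ 2 < 1 from hx))
  have hCu : ContDiffAt ℝ 2 u y := hreg.contDiffAt hnhds
  have hlocmax : IsLocalMax v y := Filter.eventually_of_mem hnhds (fun x hx => hvmax hx)
  obtain ⟨hpd1y, hpd2y, hlapy⟩ := interior_estimates hCu hlocmax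
  have hLop : -(4*ε) ≤ Lop ω u y := by
    rw [Lop, hpd1y, hpd2y]
    have hzero : ω * (-y.2 * (2*ε*y.1) + y.1 * (2*ε*y.2)) = 0 := by ring
    rw [hzero]
    linarith
  have huyM : u y ≤ M := hMmax hy
  have hxMq : xM.1 ^ 2 + xM.2 ^ 2 ≤ 1 := hxM
  have hxMq0 : 0 ≤ xM.1 ^ 2 + xM.2 ^ 2 := by positivity
  have hyq0 : 0 ≤ y.1 ^ 2 + y.2 ^ 2 := by positivity
  have huy : M - ε ≤ u y := by
    have h1 : u xM - ε * (xM.1 ^ 2 + xM.2 ^ 2) ≤ u y - ε * (y.1 ^ 2 + y.2 ^ 2) := hvmax hxM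
    linarith [mul_nonneg hε.le (by linarith : (0:ℝ) ≤ 1 - (xM.1 ^ 2 + xM.2 ^ 2)),
      mul_nonneg hε.le hyq0]
  have hzy : m ≤ z y := hmmin hy
  have hpdey := hpde y hyball
  have hu_pos : 0 < u y := by linarith
  have h1mu : 1 - u y ≤ ε := by linarith
  have hterm1 : μ * u y * (1 - u y) ≤ μ * M * ε := by
    linarith [mul_nonneg (mul_nonneg hμ.le hu_pos.le) (sub_nonneg.2 h1mu),
      mul_nonneg (mul_nonneg hμ.le (sub_nonneg.2 huyM)) hε.le]
  have hterm2 : cc * (M - ε) * m ≤ cc * u y * z y := by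
    linarith [mul_nonneg (mul_nonneg hc.le (sub_nonneg.2 huy)) (sub_nonneg.2 hzy),
      mul_nonneg (mul_nonneg hc.le (sub_nonneg.2 huy)) hm0.le,
      mul_nonneg (mul_nonneg hc.le (by linarith : (0:ℝ) ≤ M - ε)) (sub_nonneg.2 hzy)]
  have hchain : -(4*ε) ≤ μ * M * ε - cc * (M - ε) * m := by linarith
  have hP : 0 ≤ cc * m * (M/2 - ε) := mul_nonneg (mul_nonneg hc.le hm0.le) (by linarith)
  have hQ : 0 < μ * M * ε := mul_pos (mul_pos hμ (by linarith)) hε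
  linarith [hchain, hP, hQ, hεc, hε]

/-- Any positive solution of the Neumann problem for the three-component competition
system satisfies `0 < uᵢ < 1` on the closed unit ball. -/
theorem neumann_solution_below_one
    (ω μ β α γ : ℝ) (hμ : 0 < μ) (hβ : 0 < β) (hγ : 0 < γ) (hαγ : γ < α)
    (u₁ u₂ u₃ : ℝ × ℝ → ℝ)
    (hreg₁ : ContDiffOn ℝ 2 u₁ unitClosedBall)
    (hreg₂ : ContDiffOn ℝ 2 u₂ unitClosedBall)
    (hreg₃ : ContDiffOn ℝ 2 u₃ unitClosedBall)
    (hpos₁ : ∀ x ∈ unitClosedBall, 0 < u₁ x)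
    (hpos₂ : ∀ x ∈ unitClosedBall, 0 < u₂ x)
    (hpos₃ : ∀ x ∈ unitClosedBall, 0 < u₃ x)
    (hpde₁ : ∀ x ∈ unitBall,
      Lop ω u₁ x = μ * u₁ x * (1 - u₁ x) - β * α * u₁ x * u₂ x - β * γ * u₁ x * u₃ x)
    (hpde₂ : ∀ x ∈ unitBall,
      Lop ω u₂ x = μ * u₂ x * (1 - u₂ x) - β * γ * u₁ x * u₂ x - β * α * u₂ x * u₃ x)
    (hpde₃ : ∀ x ∈ unitBall,
      Lop ω u₃ x = μ * u₃ x * (1 - u₃ x) - β * α * u₁ x * u₃ x - β * γ * u₂ x * u₃ x)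
    (hbc₁ : ∀ x ∈ unitSphere, fderivWithin ℝ u₁ unitClosedBall x x = 0)
    (hbc₂ : ∀ x ∈ unitSphere, fderivWithin ℝ u₂ unitClosedBall x x = 0)
    (hbc₃ : ∀ x ∈ unitSphere, fderivWithin ℝ u₃ unitClosedBall x x = 0) :
    ∀ x ∈ unitClosedBall, (0 < u₁ x ∧ u₁ x < 1) ∧ (0 < u₂ x ∧ u₂ x < 1) ∧
      (0 < u₃ x ∧ u₃ x < 1) := by
  have hα : 0 < α := lt_trans hγ hαγ
  have hβα : 0 < β * α := mul_pos hβ hα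
  have hsub : unitBall ⊆ unitClosedBall :=
    fun x hx => le_of_lt (show x.1 ^ 2 + x.2 ^ 2 < 1 from hx)
  have h1 : ∀ x ∈ unitClosedBall, u₁ x < 1 := by
    apply below_one ω μ (β*α) hμ hβα u₁ u₂ hreg₁ hreg₂.continuousOn hpos₂ ?_ hbc₁
    intro x hx
    rw [hpde₁ x hx]
    linarith [mul_pos (mul_pos (mul_pos hβ hγ) (hpos₁ x (hsub hx))) (hpos₃ x (hsub hx))]
  have h2 : ∀ x ∈ unitClosedBall, u₂ x < 1 := by
    apply below_one ω μ (β*α) hμ hβα u₂ u₃ hreg₂ hreg₃.continuousOn hpos₃ ?_ hbc₂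
    intro x hx
    rw [hpde₂ x hx]
    linarith [mul_pos (mul_pos (mul_pos hβ hγ) (hpos₁ x (hsub hx))) (hpos₂ x (hsub hx))]
  have h3 : ∀ x ∈ unitClosedBall, u₃ x < 1 := by
    apply below_one ω μ (β*α) hμ hβα u₃ u₁ hreg₃ hreg₁.continuousOn hpos₁ ?_ hbc₃
    intro x hx
    rw [hpde₃ x hx]
    linarith [mul_pos (mul_pos (mul_pos hβ hγ) (hpos₂ x (hsub hx))) (hpos₃ x (hsub hx))]
  intro x hx
  exact ⟨⟨hpos₁ x hx, h1 x hx⟩, ⟨hpos₂ x hx, h2 x hx⟩, ⟨hpos₃ x hx, h3 x hx⟩⟩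

end
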